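/- The torsion T of the adapted connection ∇ induced by ∇̃ with torsion T̃ is given by T(X,Y) = (T̃(X̄,Ȳ))-bar + C(T̃(CX,CY)) - ([CX,CY])-bar - C[X̄,Ȳ]. Consequently, a torsion-free adapted connection for (C,V) exists if and only if both C and V are involutive, and the adapted connection induced by any torsion-free ∇̃ is torsion-quasi-free (T(X,Y) = -([CX,CY])-bar - C[X̄,Ȳ]). -/
import Mathlib


/-!
STATEMENT 16: The torsion T of the adapted connection ∇ induced by ∇̃ (with torsion T̃)
is T(X,Y) = (T̃(X̄,Ȳ))-bar + C(T̃(CX,CY)) - ([CX,CY])-bar - C[X̄,Ȳ].  Consequently a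
torsion-free adapted connection for (C,V) exists iff both C and V are involutive, and
the adapted connection induced by a torsion-free ∇̃ is torsion-quasi-free.

Abstract model as in Statements 14/15, working directly on vector fields:
`act` is the action on functions, `br` the Lie bracket, `pC`, `pV` the complementary
projections determined by (C,V); the adapted connection induced by `D` is
`indConn D X Y = ((D_{X̄} + L_{CX})Ȳ)-bar + C(D_{CX} + L_{X̄})(CY)`.
-/

variable {K : Type*} [Field K] [CharZero K]
variable {A : Type*} [CommRing A] [Algebra K A]
variable {XM : Type*} [AddCommGroup XM] [Module K XM] [Module A XM] [SMulCommClass K A XM]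

/-- `D` is a linear connection on vector fields. -/
def IsConn (act : XM →ₗ[K] A →ₗ[K] A) (D : XM →ₗ[K] XM →ₗ[K] XM) : Prop :=
  (∀ (f : A) (X Y : XM), D (f • X) Y = f • D X Y) ∧
  (∀ (X : XM) (f : A) (Y : XM), D X (f • Y) = act X f • Y + f • D X Y)

/-- The adapted connection induced by an auxiliary connection `D`. -/
noncomputable def indConn (br : XM →ₗ[K] XM →ₗ[K] XM) (pC pV : XM →ₗ[K] XM)
    (D : XM →ₗ[K] XM →ₗ[K] XM) (X Y : XM) : XM :=
  pV (D (pV X) (pV Y) + br (pC X) (pV Y)) + pC (D (pC X) (pC Y) + br (pV X) (pC Y))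

/-- The torsion of a (bilinear) connection. -/
noncomputable def torsion (br : XM →ₗ[K] XM →ₗ[K] XM) (D : XM → XM → XM) (X Y : XM) : XM :=
  D X Y - D Y X - br X Y

theorem adapted_connection_torsion
    (act : XM →ₗ[K] A →ₗ[K] A)
    (br : XM →ₗ[K] XM →ₗ[K] XM)
    (hact1 : ∀ (X : XM) (f g : A), act X (f * g) = act X f * g + f * act X g)
    (hact2 : ∀ (f : A) (X : XM) (g : A), act (f • X) g = f * act X g)
    (hbrskew : ∀ X Y : XM, br X Y = -br Y X)
    (hbrleib : ∀ (X : XM) (f : A) (Y : XM), br X (f • Y) = act X f • Y + f • br X Y)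
    (hjac : ∀ X Y Z : XM, br X (br Y Z) = br (br X Y) Z + br Y (br X Z))
    (pC pV : XM →ₗ[K] XM)
    (hpCA : ∀ (f : A) (X : XM), pC (f • X) = f • pC X)
    (hpVA : ∀ (f : A) (X : XM), pV (f • X) = f • pV X)
    (hpsum : pC + pV = LinearMap.id) (hpCidem : pC ∘ₗ pC = pC)
    -- the auxiliary connection ∇̃:
    (D : XM →ₗ[K] XM →ₗ[K] XM) (hD : IsConn act D) :
    -- (a) the torsion formula T(X,Y) = (T̃(X̄,Ȳ))-bar + C(T̃(CX,CY))
    --                                  - ([CX,CY])-bar - C[X̄,Ȳ]: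
    (∀ X Y : XM, torsion br (indConn br pC pV D) X Y =
      pV (torsion br (fun X' Y' => D X' Y') (pV X) (pV Y)) +
        pC (torsion br (fun X' Y' => D X' Y') (pC X) (pC Y)) -
        pV (br (pC X) (pC Y)) - pC (br (pV X) (pV Y))) ∧
    -- (b) the adapted connection induced by a torsion-free ∇̃ is torsion-quasi-free:
    ((∀ X Y : XM, torsion br (fun X' Y' => D X' Y') X Y = 0) →
      ∀ X Y : XM, torsion br (indConn br pC pV D) X Y =
        -pV (br (pC X) (pC Y)) - pC (br (pV X) (pV Y))) ∧
    -- (c) provided some torsion-free connection exists, a torsion-free adapted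
    -- connection exists iff both C and V are involutive:
    ((∃ D₀ : XM →ₗ[K] XM →ₗ[K] XM, IsConn act D₀ ∧
        ∀ X Y : XM, torsion br (fun X' Y' => D₀ X' Y') X Y = 0) →
      ((∃ D₁ : XM →ₗ[K] XM →ₗ[K] XM, IsConn act D₁ ∧
          ∀ X Y : XM, torsion br (indConn br pC pV D₁) X Y = 0) ↔
        ((∀ X Y : XM, pV X = 0 → pV Y = 0 → pV (br X Y) = 0) ∧
          (∀ X Y : XM, pC X = 0 → pC Y = 0 → pC (br X Y) = 0)))) := by
  have hid : ∀ Z : XM, pC Z + pV Z = Z := by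
    intro Z
    have := congrArg (fun (L : XM →ₗ[K] XM) => L Z) hpsum
    simpa using this
  have hCC : ∀ Z : XM, pC (pC Z) = pC Z := by
    intro Z
    have := congrArg (fun (L : XM →ₗ[K] XM) => L Z) hpCidem
    simpa using this
  have hCV : ∀ Z : XM, pC (pV Z) = 0 := by
    intro Z
    have h := congrArg pC (hid Z)
    rw [map_add, hCC] at h
    exact add_eq_left.mp h
  have hVC : ∀ Z : XM, pV (pC Z) = 0 := by
    intro Z
    have h := hid (pC Z)
    rw [hCC] at h
    exact add_eq_left.mp h
  have hVV : ∀ Z : XM, pV (pV Z) = pV Z := by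
    intro Z
    have h := hid (pV Z)
    rw [hCV, zero_add] at h
    exact h
  -- (a), generalized over the auxiliary connection
  have haGen : ∀ (E : XM →ₗ[K] XM →ₗ[K] XM) (X Y : XM),
      torsion br (indConn br pC pV E) X Y =
      pV (torsion br (fun X' Y' => E X' Y') (pV X) (pV Y)) +
        pC (torsion br (fun X' Y' => E X' Y') (pC X) (pC Y)) -
        pV (br (pC X) (pC Y)) - pC (br (pV X) (pV Y)) := by
    intro E X Y
    have hexp : br X Y =
        (pC (br (pC X) (pC Y)) + pV (br (pC X) (pC Y))) +
        ((pC (br (pC X) (pV Y)) + pV (br (pC X) (pV Y))) +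
        ((pC (br (pV X) (pC Y)) + pV (br (pV X) (pC Y))) +
        (pC (br (pV X) (pV Y)) + pV (br (pV X) (pV Y))))) := by
      conv_rhs => rw [hid (br (pC X) (pC Y)), hid (br (pC X) (pV Y)),
        hid (br (pV X) (pC Y)), hid (br (pV X) (pV Y))]
      conv_lhs => rw [← hid X, ← hid Y]
      simp only [map_add, LinearMap.add_apply]
      abel
    simp only [torsion, indConn, map_add, map_sub]
    rw [hexp, hbrskew (pC Y) (pV X), hbrskew (pV Y) (pC X)]
    simp only [map_neg]
    abel
  refine ⟨haGen D, ?_, ?_⟩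
  · -- (b)
    intro hfree X Y
    rw [haGen D X Y, hfree (pV X) (pV Y), hfree (pC X) (pC Y)]
    simp only [map_zero]
    abel
  · -- (c)
    rintro ⟨D₀, hD₀, hD₀free⟩
    constructor
    · rintro ⟨D₁, hD₁, hD₁free⟩
      have ha' : ∀ X Y : XM,
          pV (torsion br (fun X' Y' => D₁ X' Y') (pV X) (pV Y)) +
            pC (torsion br (fun X' Y' => D₁ X' Y') (pC X) (pC Y)) -
            pV (br (pC X) (pC Y)) - pC (br (pV X) (pV Y)) = 0 := by
        intro X Y
        rw [← haGen D₁ X Y]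
        exact hD₁free X Y
      constructor
      · intro X Y hX hY
        have h := ha' X Y
        have hCX : pC X = X := by rw [← hid X, hX, add_zero, hCC]
        have hCY : pC Y = Y := by rw [← hid Y, hY, add_zero, hCC]
        rw [hX, hY, hCX, hCY] at h
        simp only [torsion, map_zero, LinearMap.zero_apply, LinearMap.map_zero,
          sub_zero, zero_sub, neg_zero, add_zero, zero_add, sub_self] at h
        have h2 := congrArg pV h
        simp only [map_sub, map_zero, hVC, hVV, zero_sub, neg_eq_zero] at h2
        simpa using h2
      · intro X Y hX hY
        have h := ha' X Y
        have hVX : pV X = X := by rw [← hid X, hX, zero_add, hVV]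
        have hVY : pV Y = Y := by rw [← hid Y, hY, zero_add, hVV]
        rw [hX, hY, hVX, hVY] at h
        simp only [torsion, map_zero, LinearMap.zero_apply, LinearMap.map_zero,
          sub_zero, zero_sub, neg_zero, add_zero, zero_add, sub_self] at h
        have h2 := congrArg pC h
        simp only [map_sub, map_zero, hCV, hCC, zero_sub, neg_eq_zero] at h2
        simpa using h2
    · rintro ⟨hCinv, hVinv⟩
      refine ⟨D₀, hD₀, ?_⟩
      intro X Y
      rw [haGen D₀ X Y, hD₀free (pV X) (pV Y), hD₀free (pC X) (pC Y),
        hCinv (pC X) (pC Y) (hVC X) (hVC Y), hVinv (pV X) (pV Y) (hCV X) (hCV Y)]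
      simp
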